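/- Let n ≥ 2, γ > 0, d₁,…,dₙ > 0, p₁,…,pₙ ≥ 0, let u₁,…,uₙ be an orthonormal basis of ℝⁿ with u₁ = D^{1/2}𝟙/√(Σᵢ dᵢ) where D = diag(dᵢ), and let λ₂,…,λₙ ∈ ℝ. For τ₀ > 0 define F(τ₀) = Σ_{α=2}^{n} (Σᵢ pᵢ (u_{α,i})² / dᵢ) / (λ_α τ₀ + 1 + γ⁻¹ τ₀⁻¹). Then lim_{τ₀→0⁺} F(τ₀)/τ₀ = Σᵢ pᵢ (1/mᵢ − 1/Σⱼ mⱼ), where mᵢ = dᵢ/γ. -/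

import Mathlib

open Filter

/-- Corollary 1, Eq. (9): short-correlation-time asymptotic.
With damping `d i > 0`, noise intensities `p i ≥ 0`, orthonormal basis `u` of
ℝⁿ whose first vector is the zero mode `u 0 = D^{1/2}𝟙/√(Σ d)`, eigenvalues
`λ_α`, and
`F(τ₀) = Σ_{α≠0} (Σᵢ pᵢ (u_{α,i})²/dᵢ) / (λ_α τ₀ + 1 + γ⁻¹ τ₀⁻¹)`,
one has `lim_{τ₀→0⁺} F(τ₀)/τ₀ = Σᵢ pᵢ (1/mᵢ − 1/Σⱼ mⱼ)` with `mᵢ = dᵢ/γ`. -/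
theorem short_correlation_time_asymptotic
    (n : ℕ) [NeZero n] (hn : 2 ≤ n) (γ : ℝ) (hγ : 0 < γ)
    (d p : Fin n → ℝ) (hd : ∀ i, 0 < d i) (hp : ∀ i, 0 ≤ p i)
    (u : Fin n → Fin n → ℝ)
    (horth : ∀ α β, (∑ i, u α i * u β i) = if α = β then (1 : ℝ) else 0)
    (hu0 : ∀ i, u 0 i = Real.sqrt (d i) / Real.sqrt (∑ j, d j))
    (lam : Fin n → ℝ)
    (F : ℝ → ℝ)
    (hF : ∀ τ₀ : ℝ, F τ₀ = ∑ α ∈ Finset.univ.erase 0,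
      (∑ i, p i * (u α i) ^ 2 / d i) / (lam α * τ₀ + 1 + γ⁻¹ * τ₀⁻¹))
    (m : Fin n → ℝ) (hm : ∀ i, m i = d i / γ) :
    Tendsto (fun τ₀ : ℝ => F τ₀ / τ₀) (nhdsWithin 0 (Set.Ioi 0))
      (nhds (∑ i, p i * (1 / m i - 1 / ∑ j, m j))) := by
  have hS : (0:ℝ) < ∑ j, d j := Finset.sum_pos (fun j _ => hd j) Finset.univ_nonempty
  set S : ℝ := ∑ j, d j with hSdef
  -- completeness: rows of orthogonal matrix
  have hM : ∀ i : Fin n, (∑ α, u α i * u α i) = 1 := by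
    intro i
    set M : Matrix (Fin n) (Fin n) ℝ := Matrix.of u with hMdef
    have h1 : M * M.transpose = 1 := by
      ext α β
      simpa [Matrix.mul_apply, Matrix.one_apply, hMdef] using horth α β
    have h2 : M.transpose * M = 1 := mul_eq_one_comm.mp h1
    have := congrFun (congrFun h2 i) i
    simpa [Matrix.mul_apply, Matrix.one_apply, hMdef] using this
  have hkey : ∀ i : Fin n, (∑ α ∈ Finset.univ.erase 0, (u α i) ^ 2) = 1 - d i / S := by
    intro i
    have h0 : (u 0 i) ^ 2 = d i / S := by
      rw [hu0 i, div_pow, Real.sq_sqrt (hd i).le, Real.sq_sqrt hS.le]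
    have := Finset.add_sum_erase Finset.univ (fun α => (u α i) ^ 2) (Finset.mem_univ 0)
    have htot : (∑ α, (u α i) ^ 2) = 1 := by
      simpa [pow_two] using hM i
    have : (u 0 i) ^ 2 + ∑ α ∈ Finset.univ.erase 0, (u α i) ^ 2 = 1 := by
      rw [this, htot]
    linarith [this, h0]
  -- the continuous substitute
  set c : Fin n → ℝ := fun α => ∑ i, p i * (u α i) ^ 2 / d i with hc
  set g : ℝ → ℝ := fun τ => ∑ α ∈ Finset.univ.erase 0,
      c α / (lam α * τ ^ 2 + τ + γ⁻¹) with hg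
  have heq : (fun τ₀ : ℝ => F τ₀ / τ₀) =ᶠ[nhdsWithin 0 (Set.Ioi 0)] g := by
    filter_upwards [self_mem_nhdsWithin] with τ hτ
    have hτ0 : τ ≠ 0 := ne_of_gt hτ
    rw [hF τ, Finset.sum_div]
    refine Finset.sum_congr rfl fun α _ => ?_
    rw [div_div]
    congr 1
    field_simp
  have hLval : (∑ α ∈ Finset.univ.erase 0, c α / γ⁻¹)
      = ∑ i, p i * (1 / m i - 1 / ∑ j, m j) := by
    have hsm : (∑ j, m j) = S / γ := by
      simp only [hm, hSdef]
      rw [Finset.sum_div]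
    have hterm : ∀ α, c α / γ⁻¹ = ∑ i, p i / d i * γ * (u α i) ^ 2 := by
      intro α
      rw [div_eq_mul_inv, inv_inv, hc, Finset.sum_mul]
      exact Finset.sum_congr rfl fun i _ => by ring
    have : (∑ α ∈ Finset.univ.erase 0, c α / γ⁻¹)
        = ∑ i, (p i / d i * γ) * ∑ α ∈ Finset.univ.erase 0, (u α i) ^ 2 := by
      simp only [hterm, Finset.mul_sum]
      rw [Finset.sum_comm]
    rw [this]
    refine Finset.sum_congr rfl fun i _ => ?_
    rw [hkey i, hm i, hsm]
    have hdi := (hd i).ne'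
    field_simp
  rw [← hLval]
  refine Tendsto.congr' heq.symm ?_
  apply tendsto_finset_sum
  intro α _
  apply Tendsto.div tendsto_const_nhds
  · have hcont : Continuous fun τ : ℝ => lam α * τ ^ 2 + τ + γ⁻¹ := by continuity
    have := hcont.tendsto 0
    simpa using this.mono_left nhdsWithin_le_nhds
  · exact inv_ne_zero hγ.ne'
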